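/- arXiv:2408.01073 — 2 statements merged into one kernel-verified Lean document; each statement's English description precedes it below -/
import Mathlib

section
/- Let 0 < λ < 1, 0 < α < 1, δ₀ > 0, B > 0, and let ω : (0,1] → [0,∞) be nondecreasing with ∫₀¹ ω(s)/s ds < ∞. Let A be any real number with A ≥ (4B/δ₀)·( ω(1) + (1−λ)^{-1} ∫₀¹ ω(s)/s ds ). Define the sequence (T_k) by T₀ = 1 and T_k = max{ λ^α T_{k−1}, 16 ω(λ^k) B/(A δ₀) } for k ≥ 1. Then for every k ≥ 0, Σ_{i=0}^{k} T_i ≤ (4 + λ^α)/(1 − λ^α) + 1; in particular the series Σ_{k=0}^{∞} T_k converges. -/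
open MeasureTheory Set

/-- Step 3 of the proof of Theorem 1.4: the series `Σ T_k` converges.
With `T₀ = 1` and `T_k = max{λ^α T_{k-1}, 16 ω(λ^k) B/(A δ₀)}`, and
`A ≥ (4B/δ₀)(ω(1) + (1-λ)⁻¹ ∫₀¹ ω(s)/s ds)`, every partial sum of `Σ T_k` is bounded by
`(4 + λ^α)/(1 - λ^α) + 1`; in particular the series converges. -/
theorem statement11 (lam α δ₀ B A : ℝ) (hlam0 : 0 < lam) (hlam1 : lam < 1)
    (hα0 : 0 < α) (hα1 : α < 1) (hδ₀ : 0 < δ₀) (hB : 0 < B)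
    (ω : ℝ → ℝ) (hωnn : ∀ s ∈ Ioc (0 : ℝ) 1, 0 ≤ ω s)
    (hωmono : MonotoneOn ω (Ioc (0 : ℝ) 1))
    (hdini : IntegrableOn (fun s : ℝ => ω s / s) (Ioc 0 1))
    (hA : 4 * B / δ₀ * (ω 1 + (1 - lam)⁻¹ * ∫ s in Ioc (0 : ℝ) 1, ω s / s) ≤ A)
    (T : ℕ → ℝ) (hT0 : T 0 = 1)
    (hTk : ∀ k : ℕ,
      T (k + 1) = max (lam ^ α * T k) (16 * ω (lam ^ (k + 1)) * B / (A * δ₀))) :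
    (∀ k : ℕ, ∑ i ∈ Finset.range (k + 1), T i ≤ (4 + lam ^ α) / (1 - lam ^ α) + 1) ∧
    Summable T := by
  -- basic facts about powers of lam
  have hpow_pos : ∀ n : ℕ, (0 : ℝ) < lam ^ n := fun n => pow_pos hlam0 n
  have hpow_le_one : ∀ n : ℕ, lam ^ n ≤ 1 := fun n => pow_le_one₀ hlam0.le hlam1.le
  have hpow_mem : ∀ n : ℕ, lam ^ n ∈ Ioc (0 : ℝ) 1 := fun n => ⟨hpow_pos n, hpow_le_one n⟩
  have hpow_anti : ∀ n : ℕ, lam ^ (n + 1) ≤ lam ^ n := by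
    intro n
    calc lam ^ (n + 1) = lam ^ n * lam := by ring
    _ ≤ lam ^ n * 1 := by nlinarith [hpow_pos n]
    _ = lam ^ n := by ring
  have hr1 : lam ^ α < 1 := Real.rpow_lt_one hlam0.le hlam1 hα0
  have hr0 : (0 : ℝ) < lam ^ α := Real.rpow_pos_of_pos hlam0 α
  have hden : (0 : ℝ) < 1 - lam ^ α := by linarith
  set I : ℝ := ∫ s in Ioc (0 : ℝ) 1, ω s / s with hI
  have hInn : 0 ≤ I := by
    apply setIntegral_nonneg measurableSet_Ioc
    intro x hx
    exact div_nonneg (hωnn x hx) hx.1.le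
  have hω1 : 0 ≤ ω 1 := hωnn 1 ⟨one_pos, le_refl 1⟩
  have hωpnn : ∀ n : ℕ, 0 ≤ ω (lam ^ n) := fun n => hωnn _ (hpow_mem n)
  -- one-step integral estimate
  have hstep : ∀ n : ℕ, ω (lam ^ (n + 1)) * (1 - lam) ≤
      ∫ s in Ioc (lam ^ (n + 1)) (lam ^ n), ω s / s := by
    intro n
    have hsub : Ioc (lam ^ (n + 1)) (lam ^ n) ⊆ Ioc (0 : ℝ) 1 :=
      Ioc_subset_Ioc (hpow_pos (n + 1)).le (hpow_le_one n)
    have hint : IntegrableOn (fun s : ℝ => ω s / s) (Ioc (lam ^ (n + 1)) (lam ^ n)) :=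
      hdini.mono_set hsub
    have hconst : ∫ s in Ioc (lam ^ (n + 1)) (lam ^ n),
        (fun _ : ℝ => ω (lam ^ (n + 1)) / lam ^ n) s ≤
        ∫ s in Ioc (lam ^ (n + 1)) (lam ^ n), ω s / s := by
      apply setIntegral_mono_on (integrableOn_const (by
        rw [Real.volume_Ioc]; exact ENNReal.ofReal_ne_top)) hint measurableSet_Ioc
      intro x hx
      have hx' : x ∈ Ioc (0 : ℝ) 1 := hsub hx
      exact div_le_div₀ (hωnn x hx') (hωmono (hpow_mem (n + 1)) hx' hx.1.le) hx'.1 hx.2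
    have hval : ∫ s in Ioc (lam ^ (n + 1)) (lam ^ n),
        (fun _ : ℝ => ω (lam ^ (n + 1)) / lam ^ n) s
        = (lam ^ n - lam ^ (n + 1)) * (ω (lam ^ (n + 1)) / lam ^ n) := by
      rw [setIntegral_const, Real.volume_real_Ioc_of_le
        (by linarith [hpow_anti n]), smul_eq_mul]
    have heq : (lam ^ n - lam ^ (n + 1)) * (ω (lam ^ (n + 1)) / lam ^ n)
        = ω (lam ^ (n + 1)) * (1 - lam) := by
      have h0 : (lam : ℝ) ^ n ≠ 0 := (hpow_pos n).ne'
      field_simp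
      ring
    calc ω (lam ^ (n + 1)) * (1 - lam)
        = ∫ s in Ioc (lam ^ (n + 1)) (lam ^ n),
            (fun _ : ℝ => ω (lam ^ (n + 1)) / lam ^ n) s := by rw [hval, heq]
      _ ≤ _ := hconst
  -- summed integral estimate
  have hsumint : ∀ m : ℕ, ∑ i ∈ Finset.range m, ω (lam ^ (i + 1)) * (1 - lam) ≤
      ∫ s in Ioc (lam ^ m) 1, ω s / s := by
    intro m
    induction m with
    | zero => simp
    | succ m ih =>
      have hsub1 : Ioc (lam ^ (m + 1)) (lam ^ m) ⊆ Ioc (0 : ℝ) 1 :=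
        Ioc_subset_Ioc (hpow_pos (m + 1)).le (hpow_le_one m)
      have hsub2 : Ioc (lam ^ m) (1 : ℝ) ⊆ Ioc (0 : ℝ) 1 :=
        Ioc_subset_Ioc (hpow_pos m).le le_rfl
      have hunion : Ioc (lam ^ (m + 1)) (lam ^ m) ∪ Ioc (lam ^ m) (1 : ℝ)
          = Ioc (lam ^ (m + 1)) (1 : ℝ) :=
        Ioc_union_Ioc_eq_Ioc (hpow_anti m) (hpow_le_one m)
      have hadd : ∫ s in Ioc (lam ^ (m + 1)) (1 : ℝ), ω s / s
          = (∫ s in Ioc (lam ^ (m + 1)) (lam ^ m), ω s / s)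
            + ∫ s in Ioc (lam ^ m) (1 : ℝ), ω s / s := by
        rw [← hunion]
        exact setIntegral_union (Ioc_disjoint_Ioc_of_le le_rfl) measurableSet_Ioc
          (hdini.mono_set hsub1) (hdini.mono_set hsub2)
      rw [Finset.sum_range_succ, hadd]
      have := hstep m
      linarith
  have hωsum : ∀ m : ℕ, ∑ i ∈ Finset.range m, ω (lam ^ (i + 1)) ≤ (1 - lam)⁻¹ * I := by
    intro m
    have hle : ∫ s in Ioc (lam ^ m) 1, ω s / s ≤ I := by
      apply setIntegral_mono_set hdini
      · filter_upwards [ae_restrict_mem measurableSet_Ioc] with x hx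
        exact div_nonneg (hωnn x hx) hx.1.le
      · exact HasSubset.Subset.eventuallyLE (Ioc_subset_Ioc (hpow_pos m).le le_rfl)
    have h1 : (∑ i ∈ Finset.range m, ω (lam ^ (i + 1))) * (1 - lam) ≤ I := by
      rw [Finset.sum_mul]
      exact le_trans (hsumint m) hle
    have hlam' : (0 : ℝ) < 1 - lam := by linarith
    rw [inv_mul_eq_div, le_div_iff₀ hlam']
    exact h1
  -- A ≥ 0
  have hA0 : 0 ≤ A := by
    have : 0 ≤ 4 * B / δ₀ * (ω 1 + (1 - lam)⁻¹ * I) := by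
      apply mul_nonneg (by positivity)
      have : 0 ≤ (1 - lam)⁻¹ * I := mul_nonneg (inv_nonneg.2 (by linarith)) hInn
      linarith
    linarith
  -- the key bound on the error sums
  have hc4 : ∀ m : ℕ, ∑ i ∈ Finset.range m, 16 * ω (lam ^ (i + 1)) * B / (A * δ₀) ≤ 4 := by
    intro m
    rcases eq_or_lt_of_le hA0 with hA0' | hApos
    · -- A = 0 : then ω(1) = 0, hence all terms vanish
      have hω1' : ω 1 = 0 := by
        have h1 : 0 ≤ (1 - lam)⁻¹ * I := mul_nonneg (inv_nonneg.2 (by linarith)) hInn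
        have h2 : 4 * B / δ₀ * (ω 1 + (1 - lam)⁻¹ * I) ≤ 0 := by rw [hA0']; exact hA
        have h3 : 0 < 4 * B / δ₀ := by positivity
        nlinarith
      have hz : ∀ i : ℕ, ω (lam ^ (i + 1)) = 0 := by
        intro i
        have h1 := hωmono (hpow_mem (i + 1)) ⟨one_pos, le_refl 1⟩ (hpow_le_one (i + 1))
        have h2 := hωpnn (i + 1)
        linarith [hω1' ▸ h1]
      calc ∑ i ∈ Finset.range m, 16 * ω (lam ^ (i + 1)) * B / (A * δ₀)
          = ∑ i ∈ Finset.range m, (0 : ℝ) := by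
            apply Finset.sum_congr rfl; intro i _; rw [hz i]; ring
        _ = 0 := Finset.sum_const_zero
        _ ≤ 4 := by norm_num
    · -- A > 0
      have hAδ : 0 < A * δ₀ := mul_pos hApos hδ₀
      have hkey : 4 * B / δ₀ * ((1 - lam)⁻¹ * I) ≤ A := by
        have h3 : 0 < 4 * B / δ₀ := by positivity
        nlinarith
      calc ∑ i ∈ Finset.range m, 16 * ω (lam ^ (i + 1)) * B / (A * δ₀)
          = (16 * B / (A * δ₀)) * ∑ i ∈ Finset.range m, ω (lam ^ (i + 1)) := by
            rw [Finset.mul_sum]; apply Finset.sum_congr rfl; intro i _; ring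
        _ ≤ (16 * B / (A * δ₀)) * ((1 - lam)⁻¹ * I) := by
            apply mul_le_mul_of_nonneg_left (hωsum m) (by positivity)
        _ ≤ 4 := by
            set X := (1 - lam)⁻¹ * I with hX
            have hXnn : 0 ≤ X := mul_nonneg (inv_nonneg.2 (by linarith)) hInn
            have h5 : 4 * B / δ₀ * X * δ₀ ≤ A * δ₀ :=
              mul_le_mul_of_nonneg_right hkey hδ₀.le
            have h6 : 4 * B / δ₀ * X * δ₀ = 4 * B * X := by
              field_simp
            rw [div_mul_eq_mul_div, div_le_iff₀ hAδ]
            nlinarith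
  -- T is nonnegative
  have hTnn : ∀ k : ℕ, 0 ≤ T k := by
    intro k
    induction k with
    | zero => rw [hT0]; norm_num
    | succ k ih =>
      rw [hTk k]
      exact le_trans (mul_nonneg hr0.le ih) (le_max_left _ _)
  -- recursive bound
  have hTrec : ∀ k : ℕ, T (k + 1) ≤ lam ^ α * T k + 16 * ω (lam ^ (k + 1)) * B / (A * δ₀) := by
    intro k
    rw [hTk k]
    have h1 : 0 ≤ lam ^ α * T k := mul_nonneg hr0.le (hTnn k)
    have h2 : 0 ≤ 16 * ω (lam ^ (k + 1)) * B / (A * δ₀) := by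
      apply div_nonneg _ (mul_nonneg hA0 hδ₀.le)
      have := hωpnn (k + 1)
      positivity
    exact max_le (by linarith) (by linarith)
  -- main partial-sum bound by induction
  have hmain : ∀ k : ℕ, ∑ i ∈ Finset.range (k + 1), T i ≤ 5 / (1 - lam ^ α) := by
    intro k
    induction k with
    | zero =>
      rw [Finset.sum_range_one, hT0, le_div_iff₀ hden]
      nlinarith
    | succ k ih =>
      rw [Finset.sum_range_succ' T (k + 1), hT0]
      have h1 : ∑ i ∈ Finset.range (k + 1), T (i + 1)
          ≤ lam ^ α * ∑ i ∈ Finset.range (k + 1), T i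
            + ∑ i ∈ Finset.range (k + 1), 16 * ω (lam ^ (i + 1)) * B / (A * δ₀) := by
        rw [Finset.mul_sum, ← Finset.sum_add_distrib]
        exact Finset.sum_le_sum fun i _ => hTrec i
      have h2 := hc4 (k + 1)
      have h3 : lam ^ α * ∑ i ∈ Finset.range (k + 1), T i ≤ lam ^ α * (5 / (1 - lam ^ α)) :=
        mul_le_mul_of_nonneg_left ih hr0.le
      have h4 : lam ^ α * (5 / (1 - lam ^ α)) + 5 = 5 / (1 - lam ^ α) := by
        field_simp
        ring
      linarith
  have hfinal : ∀ k : ℕ, ∑ i ∈ Finset.range (k + 1), T i ≤ (4 + lam ^ α) / (1 - lam ^ α) + 1 := by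
    intro k
    have : (4 + lam ^ α) / (1 - lam ^ α) + 1 = 5 / (1 - lam ^ α) := by
      field_simp
      ring
    rw [this]
    exact hmain k
  refine ⟨hfinal, ?_⟩
  apply summable_of_sum_range_le (c := (4 + lam ^ α) / (1 - lam ^ α) + 1) hTnn
  intro n
  cases n with
  | zero =>
    simp only [Finset.range_zero, Finset.sum_empty]
    have h := hfinal 0
    rw [Finset.sum_range_one, hT0] at h
    linarith
  | succ n => exact hfinal n
end

section
/- Let 0 < λ < 1, 0 < α < 1, δ₀ > 0, B > 0, A > 0, and let ω : (0,1] → [0,∞) be nondecreasing. Define T₀ = 1 and T_k = max{ λ^α T_{k−1}, 16 ω(λ^k) B/(A δ₀) } for k ≥ 1. Then for every k ≥ 0, T_k ≤ λ^{kα} + (16 B λ^{kα})/(A δ₀ λ^α (1−λ)) · ∫_{λ^k}^{1} ω(s) s^{−1−α} ds. -/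
open MeasureTheory Set

/-- Step 4 of the proof of Theorem 1.4: decay of `T_k`.
With `T₀ = 1` and `T_k = max{λ^α T_{k-1}, 16 ω(λ^k) B/(A δ₀)}`, one has for every `k`
`T_k ≤ λ^{kα} + (16 B λ^{kα})/(A δ₀ λ^α (1-λ)) ∫_{λ^k}^1 ω(s) s^{-1-α} ds`. -/
theorem statement12 (lam α δ₀ B A : ℝ) (hlam0 : 0 < lam) (hlam1 : lam < 1)
    (hα0 : 0 < α) (hα1 : α < 1) (hδ₀ : 0 < δ₀) (hB : 0 < B) (hA : 0 < A)
    (ω : ℝ → ℝ) (hωnn : ∀ s ∈ Ioc (0 : ℝ) 1, 0 ≤ ω s)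
    (hωmono : MonotoneOn ω (Ioc (0 : ℝ) 1))
    (T : ℕ → ℝ) (hT0 : T 0 = 1)
    (hTk : ∀ k : ℕ,
      T (k + 1) = max (lam ^ α * T k) (16 * ω (lam ^ (k + 1)) * B / (A * δ₀))) :
    ∀ k : ℕ, T k ≤ lam ^ ((k : ℝ) * α) +
      16 * B * lam ^ ((k : ℝ) * α) / (A * δ₀ * lam ^ α * (1 - lam)) *
        ∫ s in Ioc (lam ^ k) 1, ω s * s ^ (-1 - α) := by
  have hPk : ∀ k : ℕ, (0:ℝ) < lam ^ k := fun k => pow_pos hlam0 k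
  have hPk1 : ∀ k : ℕ, lam ^ k ≤ 1 := fun k => pow_le_one₀ hlam0.le hlam1.le
  have hAδ : (0:ℝ) < A * δ₀ := mul_pos hA hδ₀
  have hlamα : (0:ℝ) < lam ^ α := Real.rpow_pos_of_pos hlam0 α
  have h1lam : (0:ℝ) < 1 - lam := by linarith
  have hC : (0:ℝ) < A * δ₀ * lam ^ α * (1 - lam) := by positivity
  set f : ℝ → ℝ := fun s => ω s * s ^ (-1 - α : ℝ) with hf
  -- integrability of f on Ioc a b for 0 < a, b ≤ 1
  have hint : ∀ a b : ℝ, 0 < a → b ≤ 1 → IntegrableOn f (Ioc a b) := by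
    intro a b ha hb1
    rcases le_or_gt b a with h | h
    · simp [Ioc_eq_empty (not_lt.mpr h)]
    have hsub : Ioc a b ⊆ Ioc (0:ℝ) 1 := Ioc_subset_Ioc ha.le hb1
    have hωae : AEMeasurable ω (volume.restrict (Ioc a b)) :=
      aemeasurable_restrict_of_monotoneOn measurableSet_Ioc (hωmono.mono hsub)
    have hrc : ContinuousOn (fun s : ℝ => s ^ (-1 - α : ℝ)) (Ioc a b) := by
      intro x hx
      exact (Real.continuousAt_rpow_const x _
        (Or.inl (ne_of_gt (ha.trans_le hx.1.le)))).continuousWithinAt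
    have hrae : AEMeasurable (fun s : ℝ => s ^ (-1 - α : ℝ)) (volume.restrict (Ioc a b)) :=
      hrc.aemeasurable measurableSet_Ioc
    have hmeas : AEStronglyMeasurable f (volume.restrict (Ioc a b)) :=
      (hωae.mul hrae).aestronglyMeasurable
    refine Integrable.mono' (g := fun _ => ω 1 * a ^ (-1 - α : ℝ)) ?_ hmeas ?_
    · exact integrableOn_const measure_Ioc_lt_top.ne
    · rw [ae_restrict_iff' measurableSet_Ioc]
      refine ae_of_all _ fun s hs => ?_
      have hs0 : 0 < s := ha.trans hs.1
      have hωs : 0 ≤ ω s := hωnn s (hsub hs)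
      have h1 : ω s ≤ ω 1 := hωmono (hsub hs) (by constructor <;> norm_num)
        (hs.2.trans hb1)
      have h2 : s ^ (-1 - α : ℝ) ≤ a ^ (-1 - α : ℝ) :=
        Real.rpow_le_rpow_of_nonpos ha hs.1.le (by linarith)
      have h3 : (0:ℝ) ≤ s ^ (-1 - α : ℝ) := Real.rpow_nonneg hs0.le _
      rw [Real.norm_eq_abs, abs_of_nonneg (mul_nonneg hωs h3)]
      exact mul_le_mul h1 h2 h3 (hωnn 1 (by constructor <;> norm_num))
  -- nonnegativity of T
  have hTnn : ∀ k : ℕ, 0 ≤ T k := by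
    intro k
    induction k with
    | zero => simp [hT0]
    | succ k ih =>
      rw [hTk k]
      exact le_max_of_le_left (mul_nonneg hlamα.le ih)
  -- the key lower bound on the integral over one dyadic-type block
  have key : ∀ k : ℕ, 16 * ω (lam ^ (k+1)) * B / (A * δ₀) ≤
      16 * B * lam ^ (((k:ℝ)+1) * α) / (A * δ₀ * lam ^ α * (1 - lam)) *
        ∫ s in Ioc (lam ^ (k+1)) (lam ^ k), f s := by
    intro k
    have hab : lam ^ (k+1) < lam ^ k :=
      pow_lt_pow_right_of_lt_one₀ hlam0 hlam1 (Nat.lt_succ_self k)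
    have hωa : 0 ≤ ω (lam ^ (k+1)) := hωnn _ ⟨hPk (k+1), hPk1 (k+1)⟩
    have hbneg : (0:ℝ) ≤ (lam ^ k : ℝ) ^ (-1 - α : ℝ) := Real.rpow_nonneg (hPk k).le _
    -- pointwise lower bound on Ioc
    have hlow : ∀ s ∈ Ioc (lam ^ (k+1)) (lam ^ k),
        ω (lam ^ (k+1)) * (lam ^ k : ℝ) ^ (-1 - α : ℝ) ≤ f s := by
      intro s hs
      have hs0 : 0 < s := (hPk (k+1)).trans hs.1
      have hsm : s ∈ Ioc (0:ℝ) 1 := ⟨hs0, hs.2.trans (hPk1 k)⟩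
      have h1 : ω (lam ^ (k+1)) ≤ ω s :=
        hωmono ⟨hPk (k+1), hPk1 (k+1)⟩ hsm hs.1.le
      have h2 : (lam ^ k : ℝ) ^ (-1 - α : ℝ) ≤ s ^ (-1 - α : ℝ) :=
        Real.rpow_le_rpow_of_nonpos hs0 hs.2 (by linarith)
      exact mul_le_mul h1 h2 hbneg (hωnn s hsm)
    have hconst : IntegrableOn
        (fun _ : ℝ => ω (lam ^ (k+1)) * (lam ^ k : ℝ) ^ (-1 - α : ℝ))
        (Ioc (lam ^ (k+1)) (lam ^ k)) := integrableOn_const measure_Ioc_lt_top.ne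
    have hmon := setIntegral_mono_on hconst (hint _ _ (hPk (k+1)) (hPk1 k))
      measurableSet_Ioc hlow
    rw [setIntegral_const, Real.volume_real_Ioc_of_le (by linarith),
      smul_eq_mul] at hmon
    -- exponent arithmetic
    have e1 : lam ^ (((k:ℝ)+1) * α) * (lam ^ k * (lam ^ k : ℝ) ^ (-1 - α : ℝ)) = lam ^ α := by
      rw [← Real.rpow_natCast lam k, ← Real.rpow_mul hlam0.le, ← Real.rpow_add hlam0,
        ← Real.rpow_add hlam0]
      congr 1
      ring
    have heq : 16 * B * lam ^ (((k:ℝ)+1) * α) / (A * δ₀ * lam ^ α * (1 - lam)) *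
        ((lam ^ k - lam ^ (k+1)) * (ω (lam ^ (k+1)) * (lam ^ k : ℝ) ^ (-1 - α : ℝ)))
        = 16 * ω (lam ^ (k+1)) * B / (A * δ₀) := by
      have hb : (lam:ℝ) ^ k - lam ^ (k+1) = lam ^ k * (1 - lam) := by
        rw [pow_succ]; ring
      rw [hb, div_mul_eq_mul_div, div_eq_div_iff hC.ne' hAδ.ne']
      linear_combination (16 * B * ω (lam ^ (k+1)) * (1 - lam) * (A * δ₀)) * e1
    calc 16 * ω (lam ^ (k+1)) * B / (A * δ₀)
        = 16 * B * lam ^ (((k:ℝ)+1) * α) / (A * δ₀ * lam ^ α * (1 - lam)) *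
          ((lam ^ k - lam ^ (k+1)) * (ω (lam ^ (k+1)) * (lam ^ k : ℝ) ^ (-1 - α : ℝ))) :=
          heq.symm
      _ ≤ _ := by
          apply mul_le_mul_of_nonneg_left hmon (by positivity)
  -- main induction
  intro k
  induction k with
  | zero => simp [hT0]
  | succ k ih =>
    have hDk : lam ^ α * (16 * B * lam ^ ((k:ℝ) * α) / (A * δ₀ * lam ^ α * (1 - lam)))
        = 16 * B * lam ^ (((k:ℝ)+1) * α) / (A * δ₀ * lam ^ α * (1 - lam)) := by
      have : lam ^ α * lam ^ ((k:ℝ) * α) = lam ^ (((k:ℝ)+1) * α) := by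
        rw [← Real.rpow_add hlam0]; congr 1; ring
      rw [mul_div_assoc'] at *
      rw [← this]; ring
    have hsplit : (∫ s in Ioc (lam ^ (k+1)) 1, f s)
        = (∫ s in Ioc (lam ^ (k+1)) (lam ^ k), f s) + ∫ s in Ioc (lam ^ k) 1, f s := by
      rw [← setIntegral_union (Ioc_disjoint_Ioc_of_le le_rfl) measurableSet_Ioc
        (hint _ _ (hPk (k+1)) (hPk1 k)) (hint _ _ (hPk k) le_rfl),
        Ioc_union_Ioc_eq_Ioc
          (pow_lt_pow_right_of_lt_one₀ hlam0 hlam1 (Nat.lt_succ_self k)).le (hPk1 k)]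
    have hωa : 0 ≤ ω (lam ^ (k+1)) := hωnn _ ⟨hPk (k+1), hPk1 (k+1)⟩
    have hz : 0 ≤ 16 * ω (lam ^ (k+1)) * B / (A * δ₀) := by positivity
    have hstep : T (k+1) ≤ lam ^ α * T k + 16 * ω (lam ^ (k+1)) * B / (A * δ₀) := by
      rw [hTk k]
      exact max_le (le_add_of_nonneg_right hz)
        (le_add_of_nonneg_left (mul_nonneg hlamα.le (hTnn k)))
    have hlamαpow : lam ^ α * lam ^ ((k:ℝ) * α) = lam ^ (((k:ℝ)+1) * α) := by
      rw [← Real.rpow_add hlam0]; congr 1; ring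
    have h2 : lam ^ α * T k ≤ lam ^ (((k:ℝ)+1) * α) +
        16 * B * lam ^ (((k:ℝ)+1) * α) / (A * δ₀ * lam ^ α * (1 - lam)) *
          ∫ s in Ioc (lam ^ k) 1, f s := by
      calc lam ^ α * T k ≤ lam ^ α * (lam ^ ((k:ℝ) * α) +
            16 * B * lam ^ ((k:ℝ) * α) / (A * δ₀ * lam ^ α * (1 - lam)) *
              ∫ s in Ioc (lam ^ k) 1, f s) :=
            mul_le_mul_of_nonneg_left ih hlamα.le
        _ = _ := by rw [mul_add, hlamαpow, ← mul_assoc, hDk]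
    have hcast : ((k+1 : ℕ) : ℝ) = (k:ℝ) + 1 := by push_cast; ring
    rw [hcast, hsplit]
    calc T (k+1) ≤ lam ^ α * T k + 16 * ω (lam ^ (k+1)) * B / (A * δ₀) := hstep
      _ ≤ (lam ^ (((k:ℝ)+1) * α) +
            16 * B * lam ^ (((k:ℝ)+1) * α) / (A * δ₀ * lam ^ α * (1 - lam)) *
              ∫ s in Ioc (lam ^ k) 1, f s) +
          16 * B * lam ^ (((k:ℝ)+1) * α) / (A * δ₀ * lam ^ α * (1 - lam)) *
              ∫ s in Ioc (lam ^ (k+1)) (lam ^ k), f s := add_le_add h2 (key k)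
      _ = _ := by ring
end
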